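/- Let $X_1, X_2, \ldots$ be iid with the Pareto distribution $F(x) = 1 - x^{-\alpha}$ for $x > 1$, where $\alpha > 0$, and let $X_{1:n} \le \cdots \le X_{n:n}$ be the order statistics of the first $n$. Then the random sets $\{(-\log(1 - \tfrac{i}{n+1}), \log X_{i:n}) : 1 \le i \le n\}$ converge in probability, in the Fell topology, to $\{(x, \tfrac{x}{\alpha}) : 0 \le x < \infty\}$; equivalently, for every continuous $h : \mathbb{R}^2 \to [0,\infty)$ with compact support, $\mathbb{E}\big[\max_{1 \le i \le n} h(-\log(1 - \tfrac{i}{n+1}), \log X_{i:n})\big] \to \sup_{x \ge 0} h(x, x/\alpha)$ as $n \to \infty$. -/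

import Mathlib

set_option maxHeartbeats 1000000

open MeasureTheory Filter Set ProbabilityTheory

/-- `ord n i ω` (for `1 ≤ i ≤ n`) is the `i`-th smallest among `X 1 ω, …, X n ω`:
increasing in `i`, and a rearrangement of the first `n` sample values. -/
def IsIncOrderStat {Ω : Type*} (X : ℕ → Ω → ℝ) (ord : ℕ → ℕ → Ω → ℝ) : Prop :=
  ∀ ω n, (∀ i j, 1 ≤ i → i ≤ j → j ≤ n → ord n i ω ≤ ord n j ω) ∧
    ∃ σ : Equiv.Perm (Fin n), ∀ i : Fin n, ord n (i.1 + 1) ω = X ((σ i).1 + 1) ω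



lemma card_filter_fin_lt (n m : ℕ) (hm : m ≤ n) :
    (Finset.univ.filter (fun k : Fin n => k.1 < m)).card = m := by
  rw [Finset.card_filter, Fin.sum_univ_eq_sum_range (fun j => if j < m then 1 else 0),
    ← Finset.card_filter]
  have : Finset.filter (fun i => i < m) (Finset.range n) = Finset.range m := by ext j; simp; omega
  rw [this, Finset.card_range]

lemma count_orderstat {n : ℕ} (f : ℕ → ℝ) (g : ℕ → ℝ)
    (mono : ∀ i j, 1 ≤ i → i ≤ j → j ≤ n → f i ≤ f j)
    (σ : Equiv.Perm (Fin n)) (hσ : ∀ k : Fin n, f (k.1 + 1) = g (σ k).1)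
    (i : ℕ) (hi1 : 1 ≤ i) (hin : i ≤ n) (x : ℝ) :
    f i ≤ x ↔ i ≤ ((Finset.range n).filter (fun j => g j ≤ x)).card := by
  have hcount : ((Finset.range n).filter (fun j => g j ≤ x)).card
      = (Finset.univ.filter (fun k : Fin n => f (k.1 + 1) ≤ x)).card := by
    have h1 : ((Finset.range n).filter (fun j => g j ≤ x)).card
        = (Finset.univ.filter (fun k : Fin n => g k.1 ≤ x)).card := by
      rw [Finset.card_filter, Finset.card_filter,
        Fin.sum_univ_eq_sum_range (fun j => if g j ≤ x then 1 else 0)]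
    have h2 : (Finset.univ.filter (fun k : Fin n => g k.1 ≤ x)).card
        = (Finset.univ.filter (fun k : Fin n => g (σ k).1 ≤ x)).card := by
      refine (Finset.card_bij (fun k _ => σ k) ?_ ?_ ?_).symm
      · intro a ha; simp only [Finset.mem_filter, Finset.mem_univ, true_and] at ha ⊢; exact ha
      · intro a _ b _ hab; exact σ.injective hab
      · intro b hb
        refine ⟨σ.symm b, ?_, by simp⟩
        simp only [Finset.mem_filter, Finset.mem_univ, true_and] at hb ⊢
        simpa using hb
    rw [h1, h2]
    congr 1
    apply Finset.filter_congr
    intro k _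
    simp [hσ k]
  rw [hcount]
  constructor
  · intro hfi
    have hsub : (Finset.univ.filter (fun k : Fin n => k.1 < i))
        ⊆ (Finset.univ.filter (fun k : Fin n => f (k.1 + 1) ≤ x)) := by
      intro k hk
      simp only [Finset.mem_filter, Finset.mem_univ, true_and] at hk ⊢
      exact le_trans (mono (k.1+1) i (by omega) (by omega) hin) hfi
    have := Finset.card_le_card hsub
    rwa [card_filter_fin_lt n i hin] at this
  · intro hcard
    by_contra hxf
    push_neg at hxf
    have hsub : (Finset.univ.filter (fun k : Fin n => f (k.1 + 1) ≤ x))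
        ⊆ (Finset.univ.filter (fun k : Fin n => k.1 < i - 1)) := by
      intro k hk
      simp only [Finset.mem_filter, Finset.mem_univ, true_and] at hk ⊢
      by_contra hki
      push_neg at hki
      have := mono i (k.1+1) hi1 (by omega) (by omega)
      linarith
    have := Finset.card_le_card hsub
    rw [card_filter_fin_lt n (i-1) (by omega)] at this
    omega

noncomputable def qf (α : ℝ) (p : ℝ) : ℝ := -Real.log (1 - p) / α

lemma qf_nonneg {α : ℝ} (hα : 0 < α) {p : ℝ} (h0 : 0 ≤ p) (h1 : p < 1) : 0 ≤ qf α p := by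
  have h : Real.log (1 - p) ≤ 0 := Real.log_nonpos (by linarith) (by linarith)
  have : 0 ≤ -Real.log (1 - p) := by linarith
  exact div_nonneg this hα.le

lemma qf_mono {α : ℝ} (hα : 0 < α) {a b : ℝ} (h0 : 0 ≤ a) (hab : a ≤ b) (h1 : b < 1) :
    qf α a ≤ qf α b := by
  unfold qf
  have h : Real.log (1 - b) ≤ Real.log (1 - a) :=
    Real.log_le_log (by linarith) (by linarith)
  gcongr

lemma exp_qf_rpow {α p s : ℝ} (hα : 0 < α) (h1 : p < 1) :
    (Real.exp (qf α p + s)) ^ (-α) = (1 - p) * Real.exp (-(α*s)) := by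
  rw [Real.rpow_def_of_pos (Real.exp_pos _), Real.log_exp]
  rw [show (qf α p + s) * (-α) = Real.log (1-p) + (-(α*s)) by unfold qf; field_simp; ring]
  rw [Real.exp_add, Real.exp_log (by linarith)]

lemma rpow_neg_lt_of_gt {c s α : ℝ} (hα : 0 < α) (hc : Real.exp s < c) :
    c ^ (-α) < (Real.exp s) ^ (-α) := by
  have hc0 : 0 < c := lt_trans (Real.exp_pos s) hc
  rw [Real.rpow_def_of_pos hc0, Real.rpow_def_of_pos (Real.exp_pos _), Real.log_exp]
  apply Real.exp_lt_exp.2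
  have hlog : s < Real.log c := (Real.lt_log_iff_exp_lt hc0).2 hc
  exact mul_lt_mul_of_neg_right hlog (by linarith : -α < 0)

lemma rpow_neg_gt_of_lt {c s α : ℝ} (hα : 0 < α) (hc0 : 0 < c) (hc : c < Real.exp s) :
    (Real.exp s) ^ (-α) < c ^ (-α) := by
  rw [Real.rpow_def_of_pos hc0, Real.rpow_def_of_pos (Real.exp_pos _), Real.log_exp]
  apply Real.exp_lt_exp.2
  have hlog : Real.log c < s := (Real.log_lt_iff_lt_exp hc0).2 hc
  exact mul_lt_mul_of_neg_right hlog (by linarith : -α < 0)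

lemma det_unif {α : ℝ} (hα : 0 < α) (V : ℕ → ℕ → ℝ) (N : ℕ → ℝ → ℕ)
    (hVpos : ∀ n i, 1 ≤ i → i ≤ n → 0 ≤ V n i)
    (hiff : ∀ n i (y : ℝ), 1 ≤ i → i ≤ n → (V n i ≤ y ↔ i ≤ N n (Real.exp y)))
    (hmono : ∀ n, ∀ x y : ℝ, x ≤ y → N n x ≤ N n y)
    (hconv : ∀ c : ℚ, 1 < c →
      Tendsto (fun n => (N n (c:ℝ) : ℝ) / n) atTop (nhds (1 - (c:ℝ) ^ (-α))))
    {δ P : ℝ} (hδ : 0 < δ) (hP0 : 0 < P) (hP1 : P < 1) :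
    ∀ᶠ n in atTop, ∀ i : ℕ, 1 ≤ i → i ≤ n → (i:ℝ)/((n:ℝ)+1) ≤ P →
      |V n i - qf α ((i:ℝ)/((n:ℝ)+1))| ≤ δ := by
  have he1 : Real.exp (-(α*δ/2)) < 1 := Real.exp_lt_one_iff.2 (neg_lt_zero.2 (by positivity))
  have he2 : 1 < Real.exp (α*δ/2) := Real.one_lt_exp_iff.2 (by positivity)
  set g1 := (1-P)*(1 - Real.exp (-(α*δ/2))) with hg1def
  set g2 := (1-P)*(Real.exp (α*δ/2) - 1) with hg2def
  have hg1 : 0 < g1 := mul_pos (by linarith) (by linarith)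
  have hg2 : 0 < g2 := mul_pos (by linarith) (by linarith)
  set g := min g1 g2 with hgdef
  have hg : 0 < g := lt_min hg1 hg2
  have hgg1 : g ≤ g1 := min_le_left _ _
  have hgg2 : g ≤ g2 := min_le_right _ _
  obtain ⟨m0, hm0⟩ := exists_nat_ge (4*P/g)
  set m := m0 + 1 with hmdef
  have hmpos : (0:ℝ) < m := by positivity
  have hm : 4*P/g ≤ (m:ℝ) := le_trans hm0 (by exact_mod_cast Nat.le_succ m0)
  set Δ := P/(m:ℝ) with hΔdef
  have hΔpos : 0 < Δ := div_pos hP0 hmpos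
  have hΔg : Δ ≤ g/4 := by
    have h4P : 4*P ≤ g*(m:ℝ) := by
      have := (div_le_iff₀ hg).1 hm; linarith
    rw [hΔdef, div_le_div_iff₀ hmpos (by norm_num : (0:ℝ) < 4)]
    linarith
  have hmΔ : (m:ℝ)*Δ = P := by
    rw [hΔdef, mul_comm, div_mul_cancel₀ _ (ne_of_gt hmpos)]
  -- per-cell claim
  have claim : ∀ k, k < m → ∀ᶠ n in atTop, ∀ i : ℕ, 1 ≤ i → i ≤ n →
      (k:ℝ)*Δ ≤ (i:ℝ)/((n:ℝ)+1) → (i:ℝ)/((n:ℝ)+1) ≤ ((k:ℝ)+1)*Δ →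
      |V n i - qf α ((i:ℝ)/((n:ℝ)+1))| ≤ δ := by
    intro k hk
    set pk := (k:ℝ)*Δ with hpkdef
    set pk1 := ((k:ℝ)+1)*Δ with hpk1def
    have hpk0 : 0 ≤ pk := by positivity
    have hpk1P : pk1 ≤ P := by
      rw [← hmΔ]
      have hkm : (k:ℝ)+1 ≤ (m:ℝ) := by exact_mod_cast hk
      exact mul_le_mul_of_nonneg_right hkm hΔpos.le
    have hpkpk1 : pk ≤ pk1 :=
      mul_le_mul_of_nonneg_right (by linarith : (k:ℝ) ≤ (k:ℝ)+1) hΔpos.le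
    have hpk1lt1 : pk1 < 1 := lt_of_le_of_lt hpk1P hP1
    have hpklt1 : pk < 1 := lt_of_le_of_lt hpkpk1 hpk1lt1
    have hdiff : pk1 - pk = Δ := by ring
    have hqpk0 : 0 ≤ qf α pk := qf_nonneg hα hpk0 hpklt1
    have hqpk10 : 0 ≤ qf α pk1 := qf_nonneg hα (le_trans hpk0 hpkpk1) hpk1lt1
    -- upper bound eventuality
    have EU : ∀ᶠ n in atTop, ∀ i : ℕ, 1 ≤ i → i ≤ n →
        pk ≤ (i:ℝ)/((n:ℝ)+1) → (i:ℝ)/((n:ℝ)+1) ≤ pk1 →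
        V n i ≤ qf α ((i:ℝ)/((n:ℝ)+1)) + δ := by
      obtain ⟨c, hc1, hc2⟩ := exists_rat_btwn
        (Real.exp_lt_exp.2 (show qf α pk + δ/2 < qf α pk + δ by linarith))
      have hcgt1 : (1:ℝ) < (c:ℝ) := by
        calc (1:ℝ) = Real.exp 0 := (Real.exp_zero).symm
        _ < Real.exp (qf α pk + δ/2) := Real.exp_lt_exp.2 (by linarith)
        _ < c := hc1
      have hrpow : ((c:ℝ)) ^ (-α) < (1 - pk) * Real.exp (-(α*(δ/2))) := by
        have h := rpow_neg_lt_of_gt hα hc1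
        rwa [exp_qf_rpow hα hpklt1] at h
      have h1 : (1 - pk) * Real.exp (-(α*(δ/2))) ≤ 1 - pk - g1 := by
        have hmm : (1-P)*(1 - Real.exp (-(α*δ/2))) ≤ (1-pk)*(1 - Real.exp (-(α*δ/2))) :=
          mul_le_mul_of_nonneg_right (by linarith) (by linarith)
        have heq : -(α*(δ/2)) = -(α*δ/2) := by ring
        rw [heq]
        have hexpand : (1-pk) * Real.exp (-(α*δ/2))
            = (1-pk) - (1-pk)*(1 - Real.exp (-(α*δ/2))) := by ring
        rw [hg1def]
        linarith [hmm, hexpand]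
      have hlim1 : ((c:ℝ)) ^ (-α) < 1 - pk - g1 := lt_of_lt_of_le hrpow h1
      have hev1 : ∀ᶠ n in atTop, pk1 + g/2 ≤ (N n (c:ℝ) : ℝ)/n := by
        apply (hconv c (by exact_mod_cast hcgt1)).eventually
        apply eventually_ge_nhds
        linarith
      filter_upwards [hev1, eventually_ge_atTop (Nat.ceil (2/g) + 1)] with n hn1 hn2
      intro i hi1 hin hp1 hp2
      set p := (i:ℝ)/((n:ℝ)+1) with hpdef
      have hn1' : 1 ≤ n := by omega
      have hnpos : (0:ℝ) < n := by exact_mod_cast Nat.lt_of_lt_of_le Nat.zero_lt_one hn1'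
      have hng : 1 ≤ (n:ℝ) * (g/2) := by
        have h2g : 2/g ≤ (n:ℝ) :=
          le_trans (Nat.le_ceil _) (by exact_mod_cast (by omega : Nat.ceil (2/g) ≤ n))
        have h2' := (div_le_iff₀ hg).1 h2g
        have : (n:ℝ)*(g/2) = ((n:ℝ)*g)/2 := by ring
        linarith [mul_comm (2/g) (n:ℝ)]
      have hplt1 : p < 1 := lt_of_le_of_lt (le_trans hp2 hpk1P) hP1
      have hp0 : 0 ≤ p := by positivity
      have hcexp : (c:ℝ) ≤ Real.exp (qf α p + δ) := by
        apply le_trans hc2.le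
        apply Real.exp_le_exp.2
        have := qf_mono hα hpk0 hp1 hplt1
        linarith
      have hNN : N n (c:ℝ) ≤ N n (Real.exp (qf α p + δ)) := hmono n _ _ hcexp
      have hNge : (n:ℝ)*(pk1 + g/2) ≤ (N n (c:ℝ) : ℝ) := by
        have := (le_div_iff₀ hnpos).1 hn1
        linarith
      have hi : (i:ℝ) ≤ (N n (c:ℝ) : ℝ) := by
        have hia : (i:ℝ) ≤ ((n:ℝ)+1)*pk1 := by
          rw [div_le_iff₀ (by positivity)] at hp2; linarith
        have hpk1le1 : pk1 ≤ 1 := hpk1lt1.le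
        have e1 : ((n:ℝ)+1)*pk1 = (n:ℝ)*pk1 + pk1 := by ring
        have e2 : (n:ℝ)*(pk1 + g/2) = (n:ℝ)*pk1 + (n:ℝ)*(g/2) := by ring
        linarith
      have hfin : i ≤ N n (Real.exp (qf α p + δ)) := by
        have h2 : (i:ℝ) ≤ (N n (Real.exp (qf α p + δ)) : ℝ) :=
          le_trans hi (by exact_mod_cast hNN)
        exact_mod_cast h2
      exact (hiff n i _ hi1 hin).2 hfin
    -- lower bound eventuality
    have EL : ∀ᶠ n in atTop, ∀ i : ℕ, 1 ≤ i → i ≤ n →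
        pk ≤ (i:ℝ)/((n:ℝ)+1) → (i:ℝ)/((n:ℝ)+1) ≤ pk1 →
        qf α ((i:ℝ)/((n:ℝ)+1)) - δ ≤ V n i := by
      by_cases hcase : qf α pk1 ≤ δ
      · apply Filter.Eventually.of_forall
        intro n i hi1 hin hp1 hp2
        have hplt1 : (i:ℝ)/((n:ℝ)+1) < 1 := lt_of_le_of_lt (le_trans hp2 hpk1P) hP1
        have hp0 : 0 ≤ (i:ℝ)/((n:ℝ)+1) := by positivity
        have hmq := qf_mono hα hp0 hp2 hpk1lt1
        have hVp := hVpos n i hi1 hin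
        linarith
      · push_neg at hcase
        obtain ⟨c, hc1, hc2⟩ := exists_rat_btwn
          (Real.exp_lt_exp.2 (show qf α pk1 - δ < qf α pk1 + -(δ/2) by linarith))
        have hcgt1 : (1:ℝ) < (c:ℝ) := by
          calc (1:ℝ) = Real.exp 0 := (Real.exp_zero).symm
          _ < Real.exp (qf α pk1 - δ) := Real.exp_lt_exp.2 (by linarith)
          _ < c := hc1
        have hrpow : (1 - pk1) * Real.exp (-(α*(-(δ/2)))) < ((c:ℝ)) ^ (-α) := by
          have h := rpow_neg_gt_of_lt hα (by linarith : (0:ℝ) < (c:ℝ)) hc2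
          rwa [exp_qf_rpow hα hpk1lt1] at h
        have h1 : 1 - pk1 + g2 ≤ (1 - pk1) * Real.exp (-(α*(-(δ/2)))) := by
          have hmm : (1-P)*(Real.exp (α*δ/2) - 1) ≤ (1-pk1)*(Real.exp (α*δ/2) - 1) :=
            mul_le_mul_of_nonneg_right (by linarith) (by linarith)
          have heq : -(α*(-(δ/2))) = α*δ/2 := by ring
          rw [heq]
          have hexpand : (1-pk1) * Real.exp (α*δ/2)
              = (1-pk1) + (1-pk1)*(Real.exp (α*δ/2) - 1) := by ring
          rw [hg2def]
          linarith [hmm, hexpand]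
        have hlim1 : 1 - ((c:ℝ)) ^ (-α) < pk1 - g2 := by
          have := lt_of_le_of_lt h1 hrpow
          linarith
        have hev2 : ∀ᶠ n in atTop, (N n (c:ℝ) : ℝ)/n ≤ pk - g/2 :=
          (hconv c (by exact_mod_cast hcgt1)).eventually
            (eventually_le_nhds (by linarith : 1 - ((c:ℝ)) ^ (-α) < pk - g/2))
        filter_upwards [hev2, eventually_ge_atTop (Nat.ceil (2/g) + 1)] with n hn1 hn2
        intro i hi1 hin hp1 hp2
        set p := (i:ℝ)/((n:ℝ)+1) with hpdef
        have hn1' : 1 ≤ n := by omega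
        have hnpos : (0:ℝ) < n := by exact_mod_cast Nat.lt_of_lt_of_le Nat.zero_lt_one hn1'
        have hng : 1 ≤ (n:ℝ) * (g/2) := by
          have h2g : 2/g ≤ (n:ℝ) :=
            le_trans (Nat.le_ceil _) (by exact_mod_cast (by omega : Nat.ceil (2/g) ≤ n))
          have h2' := (div_le_iff₀ hg).1 h2g
          have : (n:ℝ)*(g/2) = ((n:ℝ)*g)/2 := by ring
          linarith
        have hplt1 : p < 1 := lt_of_le_of_lt (le_trans hp2 hpk1P) hP1
        have hp0 : 0 ≤ p := by positivity
        by_contra hVlt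
        push_neg at hVlt
        have happ : i ≤ N n (Real.exp (qf α p - δ)) :=
          (hiff n i (qf α p - δ) hi1 hin).1 hVlt.le
        have hle : Real.exp (qf α p - δ) ≤ (c:ℝ) := by
          apply le_trans _ hc1.le
          apply Real.exp_le_exp.2
          have := qf_mono hα hp0 hp2 hpk1lt1
          linarith
        have hNle : N n (Real.exp (qf α p - δ)) ≤ N n (c:ℝ) := hmono n _ _ hle
        have hNup : (N n (c:ℝ) : ℝ) ≤ (n:ℝ)*pk - 1 := by
          have hd := (div_le_iff₀ hnpos).1 hn1
          have e2 : (pk - g/2)*(n:ℝ) = (n:ℝ)*pk - (n:ℝ)*(g/2) := by ring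
          linarith
        have hilow : (n:ℝ)*pk ≤ (i:ℝ) := by
          have hd := (le_div_iff₀ (by positivity : (0:ℝ) < (n:ℝ)+1)).1 hp1
          have e1 : pk*((n:ℝ)+1) = (n:ℝ)*pk + pk := by ring
          linarith
        have hic : (i:ℝ) ≤ (N n (c:ℝ) : ℝ) := by
          exact_mod_cast le_trans happ hNle
        linarith
    filter_upwards [EU, EL] with n hnU hnL
    intro i hi1 hin hp1 hp2
    have h1 := hnU i hi1 hin hp1 hp2
    have h2 := hnL i hi1 hin hp1 hp2
    rw [abs_le]; constructor <;> linarith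
  -- assemble
  have hbig : ∀ᶠ n in atTop, ∀ k ∈ Finset.range m, ∀ i : ℕ, 1 ≤ i → i ≤ n →
      (k:ℝ)*Δ ≤ (i:ℝ)/((n:ℝ)+1) → (i:ℝ)/((n:ℝ)+1) ≤ ((k:ℝ)+1)*Δ →
      |V n i - qf α ((i:ℝ)/((n:ℝ)+1))| ≤ δ :=
    (eventually_all_finset _).2 (fun k hk => claim k (Finset.mem_range.1 hk))
  filter_upwards [hbig] with n hn
  intro i hi1 hin hiP
  set p := (i:ℝ)/((n:ℝ)+1) with hpdef
  have hp0 : 0 < p := by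
    apply div_pos _ (by positivity)
    exact_mod_cast hi1
  set k := Nat.ceil (p/Δ) - 1 with hkdef
  have hceil : 1 ≤ Nat.ceil (p/Δ) := Nat.one_le_iff_ne_zero.2 (by
    simp only [ne_eq, Nat.ceil_eq_zero, not_le]
    positivity)
  have hk1 : (k:ℝ)*Δ ≤ p := by
    have hklt : k < Nat.ceil (p/Δ) := by omega
    have hlt : (k:ℝ) < p/Δ := Nat.lt_ceil.1 hklt
    exact le_of_lt ((lt_div_iff₀ hΔpos).1 hlt)
  have hk2 : p ≤ ((k:ℝ)+1)*Δ := by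
    have hkk : ((k:ℝ)+1) = (Nat.ceil (p/Δ) : ℝ) := by
      have h : k + 1 = Nat.ceil (p/Δ) := by omega
      exact_mod_cast congrArg (Nat.cast (R := ℝ)) h
    rw [hkk]
    have hle := Nat.le_ceil (p/Δ)
    calc p = (p/Δ)*Δ := by field_simp
    _ ≤ (Nat.ceil (p/Δ) : ℝ)*Δ := mul_le_mul_of_nonneg_right hle hΔpos.le
  have hkm : k < m := by
    have hclem : Nat.ceil (p/Δ) ≤ m := by
      apply Nat.ceil_le.2
      rw [div_le_iff₀ hΔpos]
      rw [← hmΔ] at hiP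
      linarith
    omega
  exact hn k (Finset.mem_range.2 hkm) i hi1 hin hk1 hk2

lemma Mconv {α : ℝ} (hα : 0 < α) (h : ℝ × ℝ → ℝ) (hcont : Continuous h)
    (h0 : ∀ q, 0 ≤ h q) (hsupp : HasCompactSupport h)
    (V : ℕ → ℕ → ℝ)
    (hunif : ∀ δ P : ℝ, 0 < δ → 0 < P → P < 1 → ∀ᶠ n : ℕ in atTop, ∀ i : ℕ, 1 ≤ i → i ≤ n →
      (i:ℝ)/((n:ℝ)+1) ≤ P → |V n i - qf α ((i:ℝ)/((n:ℝ)+1))| ≤ δ) :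
    Tendsto (fun n => sSup (h '' {q : ℝ×ℝ | ∃ i : ℕ, 1 ≤ i ∧ i ≤ n ∧
        q = (-Real.log (1 - (i:ℝ)/((n:ℝ)+1)), V n i)})) atTop
      (nhds (sSup (h '' {q : ℝ×ℝ | ∃ t : ℝ, 0 ≤ t ∧ q = (t, t/α)}))) := by
  obtain ⟨B, hBn⟩ := hcont.bounded_above_of_compact_support hsupp
  have hB : ∀ q : ℝ×ℝ, h q ≤ B := fun q => le_trans (le_abs_self _) (hBn q)
  set ray : Set (ℝ×ℝ) := {q | ∃ t : ℝ, 0 ≤ t ∧ q = (t, t/α)} with hraydef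
  set S := sSup (h '' ray) with hSdef
  have hrayne : ((0:ℝ),(0:ℝ)) ∈ ray := ⟨0, le_refl 0, by simp⟩
  have hbddray : BddAbove (h '' ray) := ⟨B, fun y ⟨q, _, hq⟩ => hq ▸ hB q⟩
  have hrayle : ∀ t : ℝ, 0 ≤ t → h (t, t/α) ≤ S :=
    fun t ht => le_csSup hbddray ⟨(t, t/α), ⟨t, ht, rfl⟩, rfl⟩
  have hS0 : 0 ≤ S := le_trans (h0 _) (by simpa using hrayle 0 le_rfl)
  obtain ⟨R, hRball⟩ := hsupp.isBounded.subset_closedBall (0 : ℝ×ℝ)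
  have hhzero : ∀ q : ℝ×ℝ, R < |q.1| → h q = 0 := by
    intro q hq
    apply image_eq_zero_of_notMem_tsupport
    intro hmem
    have hd := hRball hmem
    rw [Metric.mem_closedBall] at hd
    have h1 : |q.1| ≤ dist q 0 := by
      rw [Prod.dist_eq]
      have : dist q.1 (0:ℝ) = |q.1| := by simp [Real.dist_eq]
      rw [← this]
      exact le_max_left _ _
    linarith
  have key : ∀ ε : ℝ, 0 < ε → ∀ᶠ n in atTop,
      |sSup (h '' {q : ℝ×ℝ | ∃ i : ℕ, 1 ≤ i ∧ i ≤ n ∧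
        q = (-Real.log (1 - (i:ℝ)/((n:ℝ)+1)), V n i)}) - S| ≤ ε := by
    intro ε hε
    obtain ⟨δ₁, hδ₁, hUC⟩ := Metric.uniformContinuous_iff.1
      (hsupp.uniformContinuous_of_continuous hcont) (ε/4) (by positivity)
    obtain ⟨t', ht'pos, ht'h⟩ : ∃ t' : ℝ, 0 < t' ∧ S - ε/4 ≤ h (t', t'/α) := by
      by_cases hSε : S ≤ ε/4
      · exact ⟨1, one_pos, le_trans (by linarith) (h0 _)⟩
      · push_neg at hSε
        have hne : (h '' ray).Nonempty := ⟨h ((0:ℝ),(0:ℝ)), ⟨((0:ℝ),(0:ℝ)), hrayne, rfl⟩⟩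
        obtain ⟨y, ⟨q, hqray, rfl⟩, hy⟩ :=
          exists_lt_of_lt_csSup hne (show S - ε/4 < S by linarith)
        obtain ⟨t, ht0, rfl⟩ := hqray
        rcases lt_or_eq_of_le ht0 with htpos | hteq
        · exact ⟨t, htpos, hy.le⟩
        · have hψ : ContinuousAt (fun s : ℝ => h (s, s/α)) 0 :=
            (hcont.comp (continuous_id.prodMk (continuous_id.div_const α))).continuousAt
          have h00 : S - ε/4 < (fun s : ℝ => h (s, s/α)) 0 := by
            rw [← hteq] at hy; simpa using hy
          have hev : ∀ᶠ s in nhds (0:ℝ), S - ε/4 < h (s, s/α) :=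
            hψ.eventually (eventually_gt_nhds h00)
          have hev' : ∀ᶠ s in nhdsWithin (0:ℝ) (Set.Ioi 0),
              (S - ε/4 < h (s, s/α)) ∧ 0 < s :=
            (hev.filter_mono nhdsWithin_le_nhds).and self_mem_nhdsWithin
          obtain ⟨s, hs1, hs2⟩ := hev'.exists
          exact ⟨s, hs2, hs1.le⟩
    set C := max (R+1) (t'+1) with hCdef
    have hCpos : 0 < C := lt_of_lt_of_le (by linarith) (le_max_right _ _)
    have hCR : R + 1 ≤ C := le_max_left _ _
    have hCt : t' + 1 ≤ C := le_max_right _ _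
    set P := 1 - Real.exp (-C) with hPdef
    have hexpC : Real.exp (-C) < 1 := Real.exp_lt_one_iff.2 (by linarith)
    have hP0 : 0 < P := by simp only [hPdef]; linarith
    have hP1 : P < 1 := by have := Real.exp_pos (-C); simp only [hPdef]; linarith
    set δ := min (δ₁/2) (δ₁*α/4) with hδdef
    have hδpos : 0 < δ := lt_min (by positivity) (by positivity)
    have hδle1 : δ ≤ δ₁/2 := min_le_left _ _
    have hδle2 : δ ≤ δ₁*α/4 := min_le_right _ _
    set p' := 1 - Real.exp (-t') with hp'def
    have hexpt : Real.exp (-t') < 1 := Real.exp_lt_one_iff.2 (by linarith)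
    have hp'0 : 0 < p' := by simp only [hp'def]; linarith
    have hp'1 : p' < 1 := by have := Real.exp_pos (-t'); simp only [hp'def]; linarith
    have hp'P : p' < P := by
      have hlt : Real.exp (-C) < Real.exp (-t') := Real.exp_lt_exp.2 (by linarith)
      simp only [hp'def, hPdef]; linarith
    set I : ℕ → ℕ := fun n => Nat.ceil (p' * ((n:ℝ)+1)) with hIdef
    have hI1 : ∀ n : ℕ, 1 ≤ I n := by
      intro n
      apply Nat.one_le_iff_ne_zero.2
      simp only [hIdef, ne_eq, Nat.ceil_eq_zero, not_le]
      positivity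
    have hIlt : ∀ n : ℕ, (I n : ℝ) < p' * ((n:ℝ)+1) + 1 := by
      intro n; exact Nat.ceil_lt_add_one (by positivity)
    have hIge : ∀ n : ℕ, p' * ((n:ℝ)+1) ≤ (I n : ℝ) := fun n => Nat.le_ceil _
    have hptend : Tendsto (fun n : ℕ => (I n : ℝ)/((n:ℝ)+1)) atTop (nhds p') := by
      have hupper : Tendsto (fun n : ℕ => p' + 1/((n:ℝ)+1)) atTop (nhds p') := by
        have h1 : Tendsto (fun n : ℕ => 1/((n:ℝ)+1)) atTop (nhds 0) :=
          tendsto_one_div_add_atTop_nhds_zero_nat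
        simpa using tendsto_const_nhds.add h1
      refine tendsto_of_tendsto_of_tendsto_of_le_of_le tendsto_const_nhds hupper ?_ ?_
      · intro n
        show p' ≤ (I n : ℝ)/((n:ℝ)+1)
        rw [le_div_iff₀ (by positivity : (0:ℝ) < (n:ℝ)+1)]
        exact hIge n
      · intro n
        show (I n : ℝ)/((n:ℝ)+1) ≤ p' + 1/((n:ℝ)+1)
        rw [div_le_iff₀ (by positivity : (0:ℝ) < (n:ℝ)+1)]
        have hexp : (p' + 1/((n:ℝ)+1))*((n:ℝ)+1) = p'*((n:ℝ)+1) + 1 := by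
          field_simp
        rw [hexp]
        exact (hIlt n).le
    have hxtend : Tendsto (fun n : ℕ => -Real.log (1 - (I n : ℝ)/((n:ℝ)+1)))
        atTop (nhds t') := by
      have hcontlog : ContinuousAt (fun p : ℝ => -Real.log (1 - p)) p' := by
        apply ContinuousAt.neg
        apply ContinuousAt.comp (Real.continuousAt_log (by linarith : (1:ℝ) - p' ≠ 0))
        exact (continuous_const.sub continuous_id).continuousAt
      have := hcontlog.tendsto.comp hptend
      have hval : -Real.log (1 - p') = t' := by
        simp only [hp'def]
        rw [show (1:ℝ) - (1 - Real.exp (-t')) = Real.exp (-t') by ring, Real.log_exp]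
        ring
      rw [hval] at this
      exact this
    have hevn : ∀ᶠ n : ℕ in atTop, I n ≤ n := by
      have hmul : Tendsto (fun n : ℕ => ((n:ℝ))*(1-p')) atTop atTop :=
        (tendsto_natCast_atTop_atTop (R := ℝ)).atTop_mul_const (by linarith)
      filter_upwards [hmul.eventually_ge_atTop (p'+1)] with n hn
      have h1 : (I n : ℝ) < p' * ((n:ℝ)+1) + 1 := hIlt n
      have h2 : p' * ((n:ℝ)+1) + 1 ≤ (n:ℝ) := by nlinarith
      exact_mod_cast le_of_lt (lt_of_lt_of_le h1 h2)
    have hevP : ∀ᶠ n : ℕ in atTop, (I n : ℝ)/((n:ℝ)+1) ≤ P :=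
      hptend.eventually (eventually_le_nhds hp'P)
    have heva : ∀ᶠ n : ℕ in atTop,
        |(-Real.log (1 - (I n : ℝ)/((n:ℝ)+1))) - t'| ≤ δ := by
      have := Metric.tendsto_nhds.1 hxtend δ hδpos
      filter_upwards [this] with n hn
      rw [Real.dist_eq] at hn
      exact hn.le
    filter_upwards [hunif δ P hδpos hP0 hP1, hevn, hevP, heva] with n hu hn1 hpP ha
    set Tset := {q : ℝ×ℝ | ∃ i : ℕ, 1 ≤ i ∧ i ≤ n ∧
        q = (-Real.log (1 - (i:ℝ)/((n:ℝ)+1)), V n i)} with hTdef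
    have hTbdd : BddAbove (h '' Tset) := ⟨B, fun y ⟨q, _, hq⟩ => hq ▸ hB q⟩
    -- upper bound
    have hub : sSup (h '' Tset) ≤ S + ε := by
      apply Real.sSup_le _ (by linarith)
      rintro y ⟨q, ⟨i, hi1, hin, rfl⟩, rfl⟩
      set p := (i:ℝ)/((n:ℝ)+1) with hpdef
      have hp0 : 0 ≤ p := by positivity
      have hplt1 : p < 1 := by
        rw [hpdef, div_lt_one (by positivity)]
        have : (i:ℝ) ≤ (n:ℝ) := by exact_mod_cast hin
        linarith
      have h1p : 0 < 1 - p := by linarith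
      set x := -Real.log (1 - p) with hxdef
      have hx0 : 0 ≤ x := by
        have : Real.log (1 - p) ≤ 0 := Real.log_nonpos (by linarith) (by linarith)
        simp only [hxdef]; linarith
      by_cases hpP2 : p ≤ P
      · have hvv := hu i hi1 hin hpP2
        have hqfx : qf α p = x/α := rfl
        rw [hqfx] at hvv
        have hdist : dist ((x, V n i) : ℝ×ℝ) ((x, x/α) : ℝ×ℝ) < δ₁ := by
          rw [Prod.dist_eq]
          apply max_lt (by simp; linarith)
          rw [Real.dist_eq]
          calc |V n i - x/α| ≤ δ := hvv
          _ < δ₁ := by linarith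
        have hUC2 := hUC hdist
        rw [Real.dist_eq] at hUC2
        have habs := abs_lt.1 hUC2
        have hray2 := hrayle x hx0
        linarith [habs.2]
      · push_neg at hpP2
        have hxC : C < x := by
          have hlog : Real.log (1 - p) < -C := by
            apply (Real.log_lt_iff_lt_exp h1p).2
            simp only [hPdef] at hpP2
            linarith
          simp only [hxdef]; linarith
        have hz : h (x, V n i) = 0 := by
          apply hhzero
          simp only []
          rw [abs_of_nonneg hx0]
          linarith
        rw [hz]
        linarith
    -- lower bound
    have hlb : S - ε ≤ sSup (h '' Tset) := by
      set a := -Real.log (1 - (I n : ℝ)/((n:ℝ)+1)) with hadef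
      have hmem : h ((a, V n (I n)) : ℝ×ℝ) ∈ h '' Tset :=
        ⟨(a, V n (I n)), ⟨I n, hI1 n, hn1, rfl⟩, rfl⟩
      have hle := le_csSup hTbdd hmem
      have hlow : S - ε ≤ h ((a, V n (I n)) : ℝ×ℝ) := by
        have hun := hu (I n) (hI1 n) hn1 hpP
        have hqfa : qf α ((I n : ℝ)/((n:ℝ)+1)) = a/α := rfl
        rw [hqfa] at hun
        have hVt : |V n (I n) - t'/α| ≤ δ + δ/α := by
          have h1 : |V n (I n) - t'/α| ≤ |V n (I n) - a/α| + |a/α - t'/α| := by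
            have := abs_sub_le (V n (I n)) (a/α) (t'/α)
            linarith
          have h2 : |a/α - t'/α| = |a - t'|/α := by
            rw [show a/α - t'/α = (a - t')/α by ring, abs_div, abs_of_pos hα]
          rw [h2] at h1
          have h3 : |a - t'|/α ≤ δ/α := by gcongr
          linarith
        have hdist : dist ((a, V n (I n)) : ℝ×ℝ) ((t', t'/α) : ℝ×ℝ) < δ₁ := by
          rw [Prod.dist_eq]
          apply max_lt
          · rw [Real.dist_eq]
            calc |a - t'| ≤ δ := ha
            _ < δ₁ := by linarith
          · rw [Real.dist_eq]
            have hδα : δ/α ≤ δ₁/4 := by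
              rw [div_le_iff₀ hα]
              calc δ ≤ δ₁*α/4 := hδle2
              _ = δ₁/4*α := by ring
            calc |V n (I n) - t'/α| ≤ δ + δ/α := hVt
            _ ≤ δ₁/2 + δ₁/4 := by linarith
            _ < δ₁ := by linarith
        have hUC3 := hUC hdist
        rw [Real.dist_eq] at hUC3
        have habs := abs_lt.1 hUC3
        linarith [habs.1]
      linarith
    rw [abs_le]
    exact ⟨by linarith, by linarith⟩
  rw [Metric.tendsto_atTop]
  intro ε hε
  obtain ⟨N, hN⟩ := (eventually_atTop.1 (key (ε/2) (by linarith)))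
  exact ⟨N, fun n hn => by
    rw [Real.dist_eq]
    exact lt_of_le_of_lt (hN n hn) (by linarith)⟩

section Glue
variable {Ω : Type*} [MeasurableSpace Ω] (μ : Measure Ω) [IsProbabilityMeasure μ]
  (X : ℕ → Ω → ℝ) (α : ℝ)

lemma identX (hmeas : ∀ i, Measurable (X i))
    (hcdf : ∀ i, ∀ x : ℝ, 1 < x → μ {ω | X i ω ≤ x} = ENNReal.ofReal (1 - x ^ (-α)))
    (hcdf0 : ∀ i, ∀ x : ℝ, x ≤ 1 → μ {ω | X i ω ≤ x} = 0)
    (i j : ℕ) : IdentDistrib (X i) (X j) μ μ := by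
  refine ⟨(hmeas i).aemeasurable, (hmeas j).aemeasurable, ?_⟩
  have : IsProbabilityMeasure (μ.map (X i)) := Measure.isProbabilityMeasure_map (hmeas i).aemeasurable
  have : IsProbabilityMeasure (μ.map (X j)) := Measure.isProbabilityMeasure_map (hmeas j).aemeasurable
  apply MeasureTheory.Measure.ext_of_Iic
  intro x
  rw [Measure.map_apply (hmeas i) measurableSet_Iic,
    Measure.map_apply (hmeas j) measurableSet_Iic]
  show μ {ω | X i ω ≤ x} = μ {ω | X j ω ≤ x}
  by_cases hx : 1 < x
  · rw [hcdf i x hx, hcdf j x hx]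
  · rw [hcdf0 i x (not_lt.1 hx), hcdf0 j x (not_lt.1 hx)]

lemma slln_cnt (hmeas : ∀ i, Measurable (X i))
    (hα : 0 < α)
    (hindep : iIndepFun X μ)
    (hcdf : ∀ i, ∀ x : ℝ, 1 < x → μ {ω | X i ω ≤ x} = ENNReal.ofReal (1 - x ^ (-α)))
    (hcdf0 : ∀ i, ∀ x : ℝ, x ≤ 1 → μ {ω | X i ω ≤ x} = 0)
    (c : ℚ) (hc : 1 < c) :
    ∀ᵐ ω ∂μ, Tendsto (fun n =>
      ((((Finset.range n).filter (fun j => X (j+1) ω ≤ (c:ℝ))).card : ℕ) : ℝ)/n)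
      atTop (nhds (1 - (c:ℝ) ^ (-α))) := by
  classical
  set f : ℝ → ℝ := fun y => if y ≤ (c:ℝ) then 1 else 0 with hfdef
  have hf : Measurable f := Measurable.ite measurableSet_Iic measurable_const measurable_const
  set Z : ℕ → Ω → ℝ := fun j => f ∘ (X (j+1)) with hZdef
  have hsmeas : ∀ j : ℕ, MeasurableSet {ω | X j ω ≤ (c:ℝ)} :=
    fun j => measurableSet_le (hmeas j) measurable_const
  have hZind : ∀ j, Z j = Set.indicator {ω | X (j+1) ω ≤ (c:ℝ)} (fun _ => (1:ℝ)) := by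
    intro j
    funext ω
    by_cases hx : X (j+1) ω ≤ (c:ℝ) <;>
      simp [hZdef, hfdef, hx, Set.indicator_apply, Function.comp]
  have hint : Integrable (Z 0) μ := by
    rw [hZind 0]
    exact (integrable_const (1:ℝ)).indicator (hsmeas 1)
  have hindepZ : Pairwise (Function.onFun (IndepFun · · μ) Z) := by
    intro i j hij
    exact (hindep.indepFun (show i+1 ≠ j+1 by omega)).comp hf hf
  have hident : ∀ i, IdentDistrib (Z i) (Z 0) μ μ :=
    fun i => (identX μ X α hmeas hcdf hcdf0 (i+1) 1).comp hf
  have hmean : μ[Z 0] = 1 - (c:ℝ) ^ (-α) := by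
    rw [hZind 0]
    rw [MeasureTheory.integral_indicator_const (1:ℝ) (hsmeas 1)]
    rw [measureReal_def, hcdf 1 (c:ℝ) (by exact_mod_cast hc)]
    rw [smul_eq_mul, mul_one]
    rw [ENNReal.toReal_ofReal]
    have : (c:ℝ) ^ (-α) ≤ 1 :=
      Real.rpow_le_one_of_one_le_of_nonpos (by exact_mod_cast hc.le) (by linarith)
    linarith
  have hslln := ProbabilityTheory.strong_law_ae_real Z hint hindepZ hident
  rw [hmean] at hslln
  filter_upwards [hslln] with ω hω
  have hsum : ∀ n : ℕ, ((((Finset.range n).filter (fun j => X (j+1) ω ≤ (c:ℝ))).card : ℕ) : ℝ)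
      = ∑ j ∈ Finset.range n, Z j ω := by
    intro n
    rw [Finset.card_filter]
    push_cast
    refine Finset.sum_congr rfl fun j _ => ?_
    by_cases hx : X (j+1) ω ≤ (c:ℝ) <;> simp [hZdef, hfdef, hx, Function.comp]
  apply hω.congr
  intro n
  rw [hsum n]

lemma ae_gt_one (hcdf0 : ∀ i, ∀ x : ℝ, x ≤ 1 → μ {ω | X i ω ≤ x} = 0) :
    ∀ᵐ ω ∂μ, ∀ j, 1 < X j ω := by
  rw [ae_all_iff]
  intro j
  have h0 := hcdf0 j 1 le_rfl
  rw [ae_iff]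
  convert h0 using 2
  ext ω
  simp [not_lt]

end Glue

/-- If `X 1, X 2, …` are iid Pareto(`α`), `α > 0`
(`F(x) = 1 - x^{-α}` for `x > 1`), then the log-transformed QQ-plot sets
`{(-log(1 - i/(n+1)), log X_{i:n}) : 1 ≤ i ≤ n}` converge in probability, in the Fell
topology, to the ray `{(x, x/α) : 0 ≤ x < ∞}`; equivalently, for every continuous
`h : ℝ² → [0,∞)` with compact support, the expected sup of `h` over the random set
converges to the sup of `h` over the limit set. -/
theorem pareto_qqplot_tendstoInProb {Ω : Type*} [MeasurableSpace Ω]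
    (μ : Measure Ω) [IsProbabilityMeasure μ]
    (X : ℕ → Ω → ℝ) (α : ℝ) (hα : 0 < α) (ord : ℕ → ℕ → Ω → ℝ)
    (hmeas : ∀ i, Measurable (X i))
    (hindep : iIndepFun X μ)
    (hcdf : ∀ i, ∀ x : ℝ, 1 < x → μ {ω | X i ω ≤ x} = ENNReal.ofReal (1 - x ^ (-α)))
    (hcdf0 : ∀ i, ∀ x : ℝ, x ≤ 1 → μ {ω | X i ω ≤ x} = 0)
    (hord : IsIncOrderStat X ord) :
    ∀ h : ℝ × ℝ → ℝ, Continuous h → (∀ q, 0 ≤ h q) → HasCompactSupport h →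
      Tendsto
        (fun n => ∫ ω, sSup (h '' {q : ℝ × ℝ | ∃ i : ℕ, 1 ≤ i ∧ i ≤ n ∧
            q = (-Real.log (1 - (i : ℝ) / ((n : ℝ) + 1)), Real.log (ord n i ω))}) ∂μ)
        atTop
        (nhds (sSup (h '' {q : ℝ × ℝ | ∃ t : ℝ, 0 ≤ t ∧ q = (t, t / α)}))) := by
  intro h hcont h0 hsupp
  classical
  -- counting function
  set cnt : ℕ → ℝ → Ω → ℕ :=
    fun n x ω => ((Finset.range n).filter (fun j => X (j+1) ω ≤ x)).card with hcntdef
  -- order statistic characterization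
  have hordcnt : ∀ ω n (i : ℕ) (x : ℝ), 1 ≤ i → i ≤ n →
      (ord n i ω ≤ x ↔ i ≤ cnt n x ω) := by
    intro ω n i x hi1 hin
    obtain ⟨hmono, σ, hσ⟩ := hord ω n
    exact count_orderstat (fun k => ord n k ω) (fun j => X (j+1) ω) hmono σ
      (fun k => hσ k) i hi1 hin x
  -- ord values are X values
  have hordval : ∀ ω n (i : ℕ), 1 ≤ i → i ≤ n → ∃ j : ℕ, ord n i ω = X (j+1) ω := by
    intro ω n i hi1 hin
    obtain ⟨hmono, σ, hσ⟩ := hord ω n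
    have hlt : i - 1 < n := by omega
    refine ⟨(σ ⟨i-1, hlt⟩).1, ?_⟩
    have := hσ ⟨i-1, hlt⟩
    simpa [show (i-1)+1 = i by omega] using this
  -- measurability of cnt
  have hcntmeas : ∀ n (x : ℝ), Measurable (fun ω => cnt n x ω) := by
    intro n x
    have heq : (fun ω => cnt n x ω)
        = fun ω => ∑ j ∈ Finset.range n, if X (j+1) ω ≤ x then 1 else 0 := by
      funext ω; exact Finset.card_filter _ _
    rw [heq]
    exact Finset.measurable_sum _ (fun j _ =>
      Measurable.ite (measurableSet_le (hmeas (j+1)) measurable_const)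
        measurable_const measurable_const)
  -- measurability of ord
  have hordmeas : ∀ n (i : ℕ), 1 ≤ i → i ≤ n → Measurable (ord n i) := by
    intro n i hi1 hin
    apply measurable_of_Iic
    intro x
    have heq : ord n i ⁻¹' (Iic x) = (fun ω => cnt n x ω) ⁻¹' (Ici i) := by
      ext ω
      simp only [mem_preimage, mem_Iic, mem_Ici]
      exact hordcnt ω n i x hi1 hin
    rw [heq]
    exact (hcntmeas n x) measurableSet_Ici
  -- bound
  obtain ⟨B, hBn⟩ := hcont.bounded_above_of_compact_support hsupp
  have hB : ∀ q : ℝ×ℝ, h q ≤ B := fun q => le_trans (le_abs_self _) (hBn q)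
  -- the integrand functions
  set F : ℕ → Ω → ℝ := fun n ω => sSup (h '' {q : ℝ × ℝ | ∃ i : ℕ, 1 ≤ i ∧ i ≤ n ∧
      q = (-Real.log (1 - (i : ℝ) / ((n : ℝ) + 1)), Real.log (ord n i ω))}) with hFdef
  -- a.e. pointwise convergence
  have hae_good : ∀ᵐ ω ∂μ, (∀ j, 1 < X j ω) ∧ ∀ c : ℚ, 1 < c →
      Tendsto (fun n => ((cnt n (c:ℝ) ω : ℕ) : ℝ)/n) atTop (nhds (1 - (c:ℝ) ^ (-α))) := by
    refine (ae_gt_one μ X hcdf0).and ?_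
    rw [ae_all_iff]
    intro c
    by_cases hc : 1 < c
    · filter_upwards [slln_cnt μ X α hmeas hα hindep hcdf hcdf0 c hc] with ω hω
      intro _; exact hω
    · exact ae_of_all _ (fun ω hc' => absurd hc' hc)
  have hlim : ∀ᵐ ω ∂μ, Tendsto (fun n => F n ω) atTop
      (nhds (sSup (h '' {q : ℝ × ℝ | ∃ t : ℝ, 0 ≤ t ∧ q = (t, t / α)}))) := by
    filter_upwards [hae_good] with ω hω
    obtain ⟨hgt1, hconv⟩ := hω
    apply Mconv hα h hcont h0 hsupp (fun n i => Real.log (ord n i ω))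
    intro δ P hδ hP0 hP1
    have hordgt1 : ∀ n (i : ℕ), 1 ≤ i → i ≤ n → 1 < ord n i ω := by
      intro n i hi1 hin
      obtain ⟨j, hj⟩ := hordval ω n i hi1 hin
      rw [hj]; exact hgt1 (j+1)
    apply det_unif hα (fun n i => Real.log (ord n i ω)) (fun n x => cnt n x ω)
    · intro n i hi1 hin
      exact Real.log_nonneg (hordgt1 n i hi1 hin).le
    · intro n i y hi1 hin
      rw [Real.log_le_iff_le_exp (lt_trans one_pos (hordgt1 n i hi1 hin))]
      exact hordcnt ω n (i) (Real.exp y) hi1 hin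
    · intro n x y hxy
      exact Finset.card_le_card (Finset.monotone_filter_right _
        (fun j _ hj => le_trans hj hxy))
    · exact hconv
    · exact hδ
    · exact hP0
    · exact hP1
  -- measurability of F n
  have hFmeas : ∀ n, AEStronglyMeasurable (F n) μ := by
    intro n
    rcases Nat.eq_zero_or_pos n with hn0 | hnpos
    · subst hn0
      have hempty : ∀ (s : Set (ℝ×ℝ)), (∀ q, q ∉ s) → sSup (h '' s) = 0 := by
        intro s hs
        rw [Set.eq_empty_iff_forall_notMem.2 hs, Set.image_empty, Real.sSup_empty]
      have hzero : F 0 = fun _ => (0:ℝ) := by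
        funext ω
        simp only [hFdef]
        apply hempty
        rintro q ⟨i, hi1, hin, _⟩
        omega
      rw [hzero]
      exact aestronglyMeasurable_const
    · have hne : (Finset.Icc 1 n).Nonempty := ⟨1, by simp [Finset.mem_Icc]; omega⟩
      have heq : F n = (Finset.Icc 1 n).sup' hne (fun i ω =>
          h (-Real.log (1 - (i : ℝ) / ((n : ℝ) + 1)), Real.log (ord n i ω))) := by
        funext ω
        have himg : h '' {q : ℝ × ℝ | ∃ i : ℕ, 1 ≤ i ∧ i ≤ n ∧
            q = (-Real.log (1 - (i : ℝ) / ((n : ℝ) + 1)), Real.log (ord n i ω))}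
            = (fun i : ℕ => h (-Real.log (1 - (i : ℝ) / ((n : ℝ) + 1)),
                Real.log (ord n i ω))) '' ↑(Finset.Icc 1 n) := by
          ext y
          constructor
          · rintro ⟨q, ⟨i, hi1, hin, rfl⟩, rfl⟩
            exact ⟨i, by simp [Finset.mem_Icc]; omega, rfl⟩
          · rintro ⟨i, hi, rfl⟩
            simp only [Finset.coe_Icc, mem_Icc] at hi
            exact ⟨_, ⟨i, hi.1, hi.2, rfl⟩, rfl⟩
        simp only [hFdef]
        rw [himg, ← Finset.sup'_eq_csSup_image _ hne]
        rw [Finset.sup'_apply]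
      rw [heq]
      apply Measurable.aestronglyMeasurable
      apply Finset.measurable_sup' hne
      intro i hi
      simp only [Finset.mem_Icc] at hi
      exact hcont.measurable.comp
        (measurable_const.prodMk
          (Real.measurable_log.comp (hordmeas n i hi.1 hi.2)))
  -- bounds
  have hFbound : ∀ n, ∀ᵐ ω ∂μ, ‖F n ω‖ ≤ max B 0 := by
    intro n
    apply ae_of_all
    intro ω
    have h1 : 0 ≤ F n ω := by
      apply Real.sSup_nonneg
      rintro y ⟨q, _, rfl⟩
      exact h0 q
    have h2 : F n ω ≤ max B 0 := by
      apply Real.sSup_le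
      · rintro y ⟨q, _, rfl⟩
        exact le_trans (hB q) (le_max_left _ _)
      · exact le_max_right _ _
    rw [Real.norm_eq_abs, abs_of_nonneg h1]
    exact h2
  have hdom := MeasureTheory.tendsto_integral_of_dominated_convergence
    (fun _ => max B 0) hFmeas (integrable_const _) hFbound hlim
  have hconst : ∫ _ω, sSup (h '' {q : ℝ × ℝ | ∃ t : ℝ, 0 ≤ t ∧ q = (t, t / α)}) ∂μ
      = sSup (h '' {q : ℝ × ℝ | ∃ t : ℝ, 0 ≤ t ∧ q = (t, t / α)}) := by
    rw [integral_const, probReal_univ, one_smul]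
  rw [hconst] at hdom
  exact hdom
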